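/- Let v = (a,b) ∈ ℝ² with a ≠ 0 and b/a irrational, and let T ≥ 10 be an integer. Then there exist γ ∈ SL(2,ℤ) with ‖γ‖ ≤ T and a nonzero vector w ∈ ℝ² of rational slope such that |γ·v − w| − D_v(ρ(w))/T ≤ 10·D_v(ρ(w))/T². -/

import Mathlib

open Matrix MeasureTheory Filter Topology

noncomputable section

abbrev SL2Z := Matrix.SpecialLinearGroup (Fin 2) ℤ

/-- The real matrix associated to an element of `SL(2,ℤ)`. -/
def toR (γ : SL2Z) : Matrix (Fin 2) (Fin 2) ℝ :=
  (γ : Matrix (Fin 2) (Fin 2) ℤ).map (Int.cast)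

/-- The Euclidean plane. -/
abbrev E2 := EuclideanSpace ℝ (Fin 2)

/-- The vector of `ℝ²` with coordinates `a`, `b`. -/
def vec (a b : ℝ) : E2 := (WithLp.equiv 2 (Fin 2 → ℝ)).symm ![a, b]

/-- The action of `SL(2,ℤ)` on `ℝ²` by matrix-vector multiplication. -/
def act (γ : SL2Z) (v : E2) : E2 :=
  (WithLp.equiv 2 (Fin 2 → ℝ)).symm ((toR γ).mulVec (WithLp.equiv 2 (Fin 2 → ℝ) v))

/-- The Frobenius (euclidean) norm of a 2×2 real matrix. -/
def frobNorm (A : Matrix (Fin 2) (Fin 2) ℝ) : ℝ := Real.sqrt (∑ i, ∑ j, (A i j) ^ 2)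

/-- A vector of `ℝ²` is primitive if its coordinates are coprime integers. -/
def IsPrimitive (v : E2) : Prop := ∃ p q : ℤ, Int.gcd p q = 1 ∧ v 0 = p ∧ v 1 = q

/-- The set of points of rational slope and period `ρ`: points `v` such that `√ρ • v`
is primitive. -/
def P (ρ : ℝ) : Set E2 := {v | IsPrimitive (Real.sqrt ρ • v)}

/-- The spectrum of periods of `v`: the euclidean distance from `v` to `P ρ`. -/
def Dv (v : E2) (ρ : ℝ) : ℝ := Metric.infDist v (P ρ)

def shear (n : ℤ) : SL2Z := ⟨!![1, n; 0, 1], by simp [Matrix.det_fin_two_of]⟩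

lemma toR_shear (n : ℤ) : toR (shear n) = !![(1:ℝ), (n:ℝ); 0, 1] := by
  ext i j; fin_cases i <;> fin_cases j <;> simp [toR, shear]

lemma frob_shear (n : ℤ) : frobNorm (toR (shear n)) = Real.sqrt ((n:ℝ)^2 + 2) := by
  rw [toR_shear]; unfold frobNorm
  congr 1
  simp [Fin.sum_univ_two]
  ring

lemma vec_apply0 (a b : ℝ) : vec a b 0 = a := rfl
lemma vec_apply1 (a b : ℝ) : vec a b 1 = b := rfl

lemma act_shear (n : ℤ) (a b : ℝ) : act (shear n) (vec a b) = vec (a + n*b) b := by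
  unfold act _root_.vec
  congr 1
  rw [toR_shear, Equiv.apply_symm_apply]
  funext i
  fin_cases i <;> simp [Matrix.mulVec, dotProduct, Fin.sum_univ_two] 

lemma smul_vec (t x y : ℝ) : t • vec x y = vec (t*x) (t*y) := by
  unfold _root_.vec
  ext i
  fin_cases i <;> simp

lemma dist_vec (x y x' y' : ℝ) : dist (vec x y) (vec x' y') = Real.sqrt ((x-x')^2 + (y-y')^2) := by
  rw [EuclideanSpace.dist_eq]
  congr 1
  simp [Fin.sum_univ_two, vec_apply0, vec_apply1, Real.dist_eq, sq_abs]

lemma norm_vec (x y : ℝ) : ‖vec x y‖ = Real.sqrt (x^2 + y^2) := by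
  rw [EuclideanSpace.norm_eq]
  congr 1
  simp [Fin.sum_univ_two, vec_apply0, vec_apply1, sq_abs]

set_option maxHeartbeats 2000000 in
/-- Optimality of the gap: for `v = (a,b)` with irrational slope and any integer
`T ≥ 10`, there exist `γ ∈ SL(2,ℤ)` with `‖γ‖ ≤ T` and a nonzero vector
`w = t·(p,q)` of rational slope (of period `ρ(w) = 1/t²`) with
`|γ·v − w| − D_v(ρ(w))/T ≤ 10·D_v(ρ(w))/T²`. -/
theorem gap_optimal (a b : ℝ) (ha : a ≠ 0) (hab : Irrational (b / a))
    (T : ℤ) (hT : 10 ≤ T) :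
    ∃ γ : SL2Z, frobNorm (toR γ) ≤ (T : ℝ) ∧
      ∃ t : ℝ, t ≠ 0 ∧ ∃ p q : ℤ, Int.gcd p q = 1 ∧
        dist (act γ (vec a b)) (t • vec (p : ℝ) (q : ℝ))
            - Dv (vec a b) (1 / t ^ 2) / (T : ℝ)
          ≤ 10 * Dv (vec a b) (1 / t ^ 2) / (T : ℝ) ^ 2 := by
  have hT' : (10:ℝ) ≤ (T:ℝ) := by exact_mod_cast hT
  have hTpos : (0:ℝ) < (T:ℝ) := by linarith
  have hb : b ≠ 0 := by
    intro h
    exact hab ⟨0, by simp [h]⟩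
  -- the shear parameter
  set n : ℤ := if 0 ≤ a * b then T - 4 else 4 - T with hn
  have hnabs : |(n:ℝ)| = (T:ℝ) - 4 := by
    by_cases hc : 0 ≤ a * b
    · rw [hn]; simp only [hc, if_true]; push_cast
      rw [abs_of_nonneg (by linarith)]
    · rw [hn]; simp only [hc, if_false]; push_cast
      rw [abs_of_nonpos (by linarith)]; ring
  have hsign : 0 ≤ a * ((n:ℝ) * b) := by
    by_cases hc : 0 ≤ a * b
    · rw [hn]; simp only [hc, if_true]; push_cast
      nlinarith
    · rw [hn]; simp only [hc, if_false]; push_cast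
      nlinarith [lt_of_not_ge hc]
  have hn0 : (n:ℝ) ≠ 0 := by
    intro h; rw [h] at hnabs; simp at hnabs; linarith
  set t : ℝ := a + (n:ℝ) * b with htdef
  have ht0 : t ≠ 0 := by
    intro h
    apply hab
    have hnz : ((n:ℚ):ℝ) ≠ 0 := by push_cast; exact hn0
    refine ⟨-(1:ℚ)/(n:ℚ), ?_⟩
    have hna : a = -((n:ℝ) * b) := by rw [htdef] at h; linarith
    push_cast
    rw [hna]
    field_simp
  -- |t| is large
  have htabs : |a| + ((T:ℝ) - 4) * |b| ≤ |t| := by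
    have h1 : |t| = |a| + |(n:ℝ) * b| := by
      rcases lt_or_gt_of_ne ha with hA | hA
      · have hB : (n:ℝ) * b ≤ 0 := by nlinarith
        rw [htdef, abs_of_nonpos (by linarith), abs_of_nonpos (le_of_lt hA),
          abs_of_nonpos hB]; ring
      · have hB : 0 ≤ (n:ℝ) * b := by nlinarith
        rw [htdef, abs_of_nonneg (by linarith), abs_of_nonneg (le_of_lt hA),
          abs_of_nonneg hB]
    rw [h1, abs_mul, hnabs]
  -- lower bound on Dv
  have htp : (0:ℝ) < |t| := abs_pos.mpr ht0
  have hs : Real.sqrt (1 / t^2) = 1 / |t| := by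
    rw [one_div, Real.sqrt_inv, Real.sqrt_sq_eq_abs, one_div]
  have hPne : (P (1 / t^2)).Nonempty := by
    refine ⟨vec |t| 0, 1, 0, by simp, ?_, ?_⟩
    · rw [hs, smul_vec, vec_apply0]
      push_cast
      field_simp
    · rw [hs, smul_vec, vec_apply1]
      push_cast
      ring
  have hvnorm : ‖vec a b‖ ≤ |a| + |b| := by
    rw [norm_vec]
    rw [show (|a| + |b|) = Real.sqrt ((|a| + |b|)^2) from (Real.sqrt_sq (by positivity)).symm]
    apply Real.sqrt_le_sqrt
    nlinarith [abs_nonneg a, abs_nonneg b, sq_abs a, sq_abs b, abs_mul a b, abs_nonneg (a*b)]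
  have hD : ((T:ℝ) - 5) * |b| ≤ Dv (vec a b) (1 / t^2) := by
    rw [Dv]
    by_contra hcon
    push_neg at hcon
    obtain ⟨u, hu, hud⟩ := (Metric.infDist_lt_iff hPne).mp hcon
    obtain ⟨p, q, hpq, h0, h1⟩ := hu
    rw [hs] at h0 h1
    have hu0 : u 0 = |t| * p := by
      have : (1/|t|) * u 0 = p := h0
      field_simp at this ⊢
      linarith
    have hu1 : u 1 = |t| * q := by
      have : (1/|t|) * u 1 = q := h1
      field_simp at this ⊢
      linarith
    have hpq1 : (1:ℝ) ≤ (p:ℝ)^2 + (q:ℝ)^2 := by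
      have hne : p ≠ 0 ∨ q ≠ 0 := by
        by_contra hh
        push_neg at hh
        rw [hh.1, hh.2] at hpq
        simp at hpq
      rcases hne with h | h
      · have : (1:ℤ) ≤ p^2 := by nlinarith [Int.one_le_abs h, sq_abs p]
        have : (1:ℝ) ≤ (p:ℝ)^2 := by exact_mod_cast this
        nlinarith [sq_nonneg (q:ℝ)]
      · have : (1:ℤ) ≤ q^2 := by nlinarith [Int.one_le_abs h, sq_abs q]
        have : (1:ℝ) ≤ (q:ℝ)^2 := by exact_mod_cast this
        nlinarith [sq_nonneg (p:ℝ)]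
    have hunorm : |t| ≤ ‖u‖ := by
      have : ‖u‖ = Real.sqrt ((u 0)^2 + (u 1)^2) := by
        rw [EuclideanSpace.norm_eq]
        congr 1
        simp [Fin.sum_univ_two, sq_abs]
      rw [this]
      calc |t| = Real.sqrt (t^2) := (Real.sqrt_sq_eq_abs t).symm
        _ ≤ Real.sqrt ((u 0)^2 + (u 1)^2) := by
            apply Real.sqrt_le_sqrt
            rw [hu0, hu1]
            nlinarith [mul_le_mul_of_nonneg_left hpq1 (sq_nonneg |t|), sq_abs t]
    have hdist : ‖u‖ - ‖vec a b‖ ≤ dist (vec a b) u := by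
      rw [dist_eq_norm]
      calc ‖u‖ - ‖vec a b‖ ≤ ‖u - vec a b‖ := norm_sub_norm_le _ _
        _ = ‖vec a b - u‖ := by rw [norm_sub_rev]
    have : ((T:ℝ) - 5) * |b| ≤ dist (vec a b) u := by
      linarith [htabs, hunorm, hdist, hvnorm]
    linarith
  -- assemble
  refine ⟨shear n, ?_, t, ht0, 1, 0, by simp, ?_⟩
  · rw [frob_shear]
    rw [show (T:ℝ) = Real.sqrt ((T:ℝ)^2) from (Real.sqrt_sq (le_of_lt hTpos)).symm]
    apply Real.sqrt_le_sqrt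
    have : (n:ℝ)^2 = ((T:ℝ)-4)^2 := by
      rw [← sq_abs, hnabs]
    rw [this]; nlinarith
  · rw [act_shear, smul_vec]
    push_cast
    rw [show t * 1 = t by ring, show t * 0 = 0 by ring, ← htdef, dist_vec]
    have hdd : Real.sqrt ((t - t)^2 + (b - 0)^2) = |b| := by
      simp [sub_self]
      rw [← sq_abs b]
      exact Real.sqrt_sq (abs_nonneg b)
    rw [hdd]
    set D := Dv (vec a b) (1 / t^2) with hDdef
    have hD0 : 0 ≤ D := Metric.infDist_nonneg
    rw [sub_le_iff_le_add, div_add_div _ _ (by positivity) (by positivity)]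
    rw [le_div_iff₀ (by positivity)]
    have hmul : ((T:ℝ)-5)*|b| * (10*(T:ℝ) + (T:ℝ)^2) ≤ D * (10*(T:ℝ) + (T:ℝ)^2) :=
      mul_le_mul_of_nonneg_right hD (by nlinarith)
    nlinarith [hmul, abs_nonneg b, hT',
      mul_nonneg (mul_nonneg (abs_nonneg b) (le_of_lt hTpos)) (show (0:ℝ) ≤ (T:ℝ) - 10 by linarith)]
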